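/- Fix a natural number a > 1 and a constant c > 0. There exist a constant C > 0 and an integer d₀ such that for every integer d ≥ d₀ and every integer K with c·d < K ≤ d^{a-1}, if f is a uniformly random polynomial from P_{d,K}, then the probability that there exists an integer n ≥ 1 such that the n-th cyclotomic polynomial Φ_n has degree at most √d/(log d)² and Φ_n divides f in ℤ[x] is at most C/K. -/

import Mathlib

set_option maxHeartbeats 1000000

open Polynomial

/-- `PdK d K` is the set of monic integer polynomials of degree `d` with all
coefficients bounded by `K` in absolute value and nonzero constant term. -/
def PdK (d K : ℕ) : Set (Polynomial ℤ) :=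
  {f | f.Monic ∧ f.natDegree = d ∧ f.coeff 0 ≠ 0 ∧ ∀ i < d, |f.coeff i| ≤ (K : ℤ)}

lemma totient_sq_bound : ∀ n : ℕ, n ≤ 2 * n.totient ^ 2 ∧ (Odd n → n ≤ n.totient ^ 2) := by
  intro n
  induction n using Nat.recOnPosPrimePosCoprime with
  | zero => simp
  | one => simp
  | prime_pow p k hp hk =>
    have hp' : p.Prime := hp
    obtain ⟨j, rfl⟩ : ∃ j, k = j + 1 := ⟨k - 1, by omega⟩
    rw [Nat.totient_prime_pow_succ hp']
    rcases eq_or_ne p 2 with rfl | hodd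
    · constructor
      · have h1 : (2:ℕ) ^ (j + 1) ≤ 2 * ((2:ℕ) ^ j) ^ 2 := by
          rw [← pow_mul, pow_succ]
          have : 2 ^ j ≤ 2 ^ (j * 2) := Nat.pow_le_pow_right (by norm_num) (by omega)
          omega
        simpa using h1
      · intro h
        exfalso
        rw [Nat.odd_iff] at h
        simp [Nat.pow_mod] at h
    · have hp3 : 3 ≤ p := by
        have := hp'.two_le
        omega
      have key : p ^ (j + 1) ≤ (p ^ j * (p - 1)) ^ 2 := by
        rw [mul_pow, ← pow_mul, pow_succ]
        have h1 : p ^ j ≤ p ^ (j * 2) := Nat.pow_le_pow_right (by omega) (by omega)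
        have h2 : p ≤ (p - 1) ^ 2 := by
          obtain ⟨q, rfl⟩ : ∃ q, p = q + 3 := ⟨p - 3, by omega⟩
          have h0 : q + 3 - 1 = q + 2 := rfl
          rw [h0]
          nlinarith
        calc p ^ j * p ≤ p ^ (j * 2) * (p - 1) ^ 2 := Nat.mul_le_mul h1 h2
        _ = _ := rfl
      exact ⟨le_trans key (by omega), fun _ => key⟩
  | coprime a b ha hb hab Pa Pb =>
    rw [Nat.totient_mul hab]
    rcases Nat.even_or_odd a with hea | hoa
    · have hob : Odd b := by
        rcases Nat.even_or_odd b with heb | hob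
        · exfalso
          obtain ⟨x, hx⟩ := hea; obtain ⟨y, hy⟩ := heb
          have : 2 ∣ Nat.gcd a b := Nat.dvd_gcd ⟨x, by omega⟩ ⟨y, by omega⟩
          rw [Nat.Coprime] at hab
          omega
        · exact hob
      constructor
      · have := Pa.1
        have := Pb.2 hob
        calc a * b ≤ (2 * a.totient ^ 2) * (b.totient ^ 2) := Nat.mul_le_mul Pa.1 (Pb.2 hob)
        _ = 2 * (a.totient * b.totient) ^ 2 := by ring
      · intro hod
        exfalso
        exact (Nat.not_odd_iff_even.2 hea) (Nat.odd_mul.1 hod).1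
    · rcases Nat.even_or_odd b with heb | hob
      · constructor
        · calc a * b ≤ (a.totient ^ 2) * (2 * b.totient ^ 2) := Nat.mul_le_mul (Pa.2 hoa) Pb.1
          _ = 2 * (a.totient * b.totient) ^ 2 := by ring
        · intro hod
          exact absurd (Nat.odd_mul.1 hod).2 (Nat.not_odd_iff_even.2 heb)
      · have key : a * b ≤ (a.totient * b.totient) ^ 2 := by
          calc a * b ≤ (a.totient ^ 2) * (b.totient ^ 2) := Nat.mul_le_mul (Pa.2 hoa) (Pb.2 hob)
          _ = _ := by ring
        exact ⟨le_trans key (by omega), fun _ => key⟩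

lemma finite_PdK (d K : ℕ) : (PdK d K).Finite := by
  rw [← Set.not_infinite]
  intro hinf
  have : Infinite ↥(PdK d K) := hinf.to_subtype
  have key : ∀ f : ↥(PdK d K), ∀ i : Fin d, ((f : Polynomial ℤ).coeff i + K).toNat < 2 * K + 1 := by
    rintro ⟨f, hm, hd, h0, hb⟩ i
    show (f.coeff i + K).toNat < 2 * K + 1
    have := hb i i.2
    rw [abs_le] at this
    omega
  set F : ↥(PdK d K) → (Fin d → Fin (2 * K + 1)) :=
    fun f i => ⟨((f : Polynomial ℤ).coeff i + K).toNat, key f i⟩ with hF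
  have hinj : Function.Injective F := by
    rintro ⟨f, hmf, hdf, h0f, hbf⟩ ⟨g, hmg, hdg, h0g, hbg⟩ hfg
    refine Subtype.ext (Polynomial.ext fun j => ?_)
    show f.coeff j = g.coeff j
    rcases lt_trichotomy j d with hjd | rfl | hjd
    · have := congrFun hfg ⟨j, hjd⟩
      rw [hF] at this
      simp only [Fin.mk.injEq] at this
      change (f.coeff j + K).toNat = (g.coeff j + K).toNat at this
      have hbf' := hbf _ hjd
      have hbg' := hbg _ hjd
      rw [abs_le] at hbf' hbg'
      omega
    · rw [← hdf] at hdg ⊢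
      rw [hmf.coeff_natDegree, ← hdg, hmg.coeff_natDegree]
    · rw [coeff_eq_zero_of_natDegree_lt (by omega : f.natDegree < j),
        coeff_eq_zero_of_natDegree_lt (by omega : g.natDegree < j)]
  exact (Finite.of_injective F hinj).false

lemma card_dvd_le (d K n : ℕ) :
    Nat.card {f : Polynomial ℤ | f ∈ PdK d K ∧ cyclotomic n ℤ ∣ f}
      ≤ (2 * K + 1) ^ (d - n.totient) := by
  set t := d - n.totient with ht
  by_cases hφ : n.totient ≤ d
  · have key : ∀ f : {f : Polynomial ℤ | f ∈ PdK d K ∧ cyclotomic n ℤ ∣ f},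
        ∀ i : Fin t, ((f : Polynomial ℤ).coeff (n.totient + i) + K).toNat < 2 * K + 1 := by
      rintro ⟨f, ⟨hm, hd, h0, hb⟩, hdvd⟩ i
      show (f.coeff (n.totient + i) + K).toNat < 2 * K + 1
      have hi : n.totient + (i : ℕ) < d := by
        have := i.2
        omega
      have := hb _ hi
      rw [abs_le] at this
      omega
    set F : {f : Polynomial ℤ | f ∈ PdK d K ∧ cyclotomic n ℤ ∣ f} → (Fin t → Fin (2 * K + 1)) :=
      fun f i => ⟨((f : Polynomial ℤ).coeff (n.totient + i) + K).toNat, key f i⟩ with hF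
    have hinj : Function.Injective F := by
      rintro ⟨f, ⟨hmf, hdf, h0f, hbf⟩, hdvf⟩ ⟨g, ⟨hmg, hdg, h0g, hbg⟩, hdvg⟩ hfg
      have hco : ∀ j, n.totient ≤ j → (f - g).coeff j = 0 := by
        intro j hj
        rcases lt_trichotomy j d with hjd | rfl | hjd
        · have hji : ∃ i : Fin t, j = n.totient + i := ⟨⟨j - n.totient, by omega⟩, by simp; omega⟩
          obtain ⟨i, rfl⟩ := hji
          have := congrFun hfg i
          rw [hF] at this
          simp only [Fin.mk.injEq] at this
          have hbf' := hbf _ (by omega : n.totient + (i:ℕ) < d)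
          have hbg' := hbg _ (by omega : n.totient + (i:ℕ) < d)
          rw [abs_le] at hbf' hbg'
          simp only [coeff_sub]
          omega
        · simp only [coeff_sub]
          rw [← hdf] at hdg ⊢
          rw [hmf.coeff_natDegree, ← hdg, hmg.coeff_natDegree]
          ring
        · simp only [coeff_sub]
          rw [coeff_eq_zero_of_natDegree_lt (by omega : f.natDegree < j),
            coeff_eq_zero_of_natDegree_lt (by omega : g.natDegree < j)]
          ring
      have hdeg : (f - g).degree < (cyclotomic n ℤ).degree := by
        rw [degree_cyclotomic]
        rw [degree_lt_iff_coeff_zero]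
        intro m hm
        exact hco m (by exact_mod_cast hm)
      have := eq_zero_of_dvd_of_degree_lt (dvd_sub hdvf hdvg) hdeg
      exact Subtype.ext (sub_eq_zero.1 this)
    calc Nat.card {f : Polynomial ℤ | f ∈ PdK d K ∧ cyclotomic n ℤ ∣ f}
        ≤ Nat.card (Fin t → Fin (2 * K + 1)) := Nat.card_le_card_of_injective F hinj
      _ = (2 * K + 1) ^ t := by simp [Nat.card_eq_fintype_card]
  · convert Nat.zero_le _
    rw [Nat.card_eq_zero]
    left
    rw [isEmpty_subtype]
    rintro f ⟨⟨hm, hd, h0, hb⟩, hdvd⟩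
    have hf0 : f ≠ 0 := hm.ne_zero
    have := Polynomial.natDegree_le_of_dvd hdvd hf0
    rw [natDegree_cyclotomic, hd] at this
    omega

lemma card_PdK_ge (d K : ℕ) (hd : 2 ≤ d) (hK : 1 ≤ K) :
    K * (2 * K + 1) ^ (d - 1) ≤ Nat.card ↥(PdK d K) := by
  have : Finite ↥(PdK d K) := (finite_PdK d K).to_subtype
  -- coefficient helper
  have hcoeff : ∀ (w : ℕ → ℤ) (m : ℕ),
      (X ^ d + ∑ i : Fin d, C (w i) * X ^ (i : ℕ)).coeff m
        = (if m = d then 1 else 0) + (if m < d then w m else 0) := by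
    intro w m
    rw [coeff_add, coeff_X_pow, Fin.sum_univ_eq_sum_range (fun i => C (w i) * X ^ i) d,
      finset_sum_coeff]
    congr 1
    simp only [coeff_C_mul, coeff_X_pow]
    rw [Finset.sum_congr rfl (fun i _ => by rw [mul_ite, mul_one, mul_zero])]
    rw [Finset.sum_ite_eq (Finset.range d) m w]
    simp [Finset.mem_range]
  have hdeg : ∀ (w : ℕ → ℤ),
      (X ^ d + ∑ i : Fin d, C (w i) * X ^ (i : ℕ)).Monic ∧
      (X ^ d + ∑ i : Fin d, C (w i) * X ^ (i : ℕ)).natDegree = d := by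
    intro w
    have hlt : (∑ i : Fin d, C (w i) * X ^ (i : ℕ)).degree < (d : WithBot ℕ) :=
      degree_sum_fin_lt (fun i : Fin d => w (i : ℕ))
    constructor
    · exact monic_X_pow_add hlt
    · apply natDegree_eq_of_degree_eq_some
      rw [degree_add_eq_left_of_degree_lt (by rwa [degree_X_pow])]
      exact degree_X_pow d
  -- the injection
  set wfun : Fin K × (Fin (d - 1) → Fin (2 * K + 1)) → ℕ → ℤ := fun z i =>
    if i = 0 then (z.1 : ℤ) + 1
    else if h : i - 1 < d - 1 then ((z.2 ⟨i - 1, h⟩ : ℕ) : ℤ) - K else 0 with hwfun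
  have hwbound : ∀ z i, i < d → |wfun z i| ≤ (K : ℤ) := by
    intro z i hi
    simp only [hwfun]
    rcases eq_or_ne i 0 with rfl | hi0
    · have hz := z.1.2
      simp only [reduceIte]
      rw [abs_le]
      omega
    · have h1 : i - 1 < d - 1 := by omega
      rw [if_neg hi0, dif_pos h1]
      have := (z.2 ⟨i - 1, h1⟩).2
      rw [abs_le]
      constructor <;> [omega; omega]
  set G : Fin K × (Fin (d - 1) → Fin (2 * K + 1)) → Polynomial ℤ := fun z =>
    X ^ d + ∑ i : Fin d, C (wfun z i) * X ^ (i : ℕ) with hG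
  have hGmem : ∀ z, G z ∈ PdK d K := by
    intro z
    refine ⟨(hdeg (wfun z)).1, (hdeg (wfun z)).2, ?_, ?_⟩
    · rw [hG, hcoeff]
      have h0d : (0 : ℕ) ≠ d := by omega
      rw [if_neg h0d, if_pos (by omega)]
      simp only [hwfun, reduceIte]
      have hz := z.1.2
      omega
    · intro i hi
      rw [hG, hcoeff, if_neg (by omega : i ≠ d), if_pos hi]
      simpa using hwbound z i hi
  set G' : Fin K × (Fin (d - 1) → Fin (2 * K + 1)) → ↥(PdK d K) := fun z => ⟨G z, hGmem z⟩
  have hinj : Function.Injective G' := by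
    intro z1 z2 h
    have hco : ∀ m, m < d → wfun z1 m = wfun z2 m := by
      intro m hm
      have := congrArg (fun f : ↥(PdK d K) => (f : Polynomial ℤ).coeff m) h
      simp only [G', hG] at this
      rw [hcoeff, hcoeff, if_neg (by omega : m ≠ d), if_pos hm, if_pos hm] at this
      omega
    have h1 : z1.1 = z2.1 := by
      have := hco 0 (by omega)
      simp only [hwfun, reduceIte] at this
      exact Fin.ext (by omega)
    have h2 : z1.2 = z2.2 := by
      funext i
      have him : (i : ℕ) + 1 < d := by have := i.2; omega
      have := hco ((i : ℕ) + 1) him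
      have hne : (i : ℕ) + 1 ≠ 0 := by omega
      have hlt : (i : ℕ) + 1 - 1 < d - 1 := by have := i.2; omega
      simp only [hwfun] at this
      rw [if_neg hne, if_neg hne, dif_pos hlt, dif_pos hlt] at this
      have : (z1.2 ⟨(i : ℕ) + 1 - 1, hlt⟩ : ℕ) = (z2.2 ⟨(i : ℕ) + 1 - 1, hlt⟩ : ℕ) := by omega
      have hii : (⟨(i : ℕ) + 1 - 1, hlt⟩ : Fin (d - 1)) = i := by
        apply Fin.ext; simp
      rw [hii] at this
      exact Fin.ext this
    exact Prod.ext h1 h2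
  calc K * (2 * K + 1) ^ (d - 1)
      = Nat.card (Fin K × (Fin (d - 1) → Fin (2 * K + 1))) := by
        simp [Nat.card_eq_fintype_card]
    _ ≤ Nat.card ↥(PdK d K) := Nat.card_le_card_of_injective G' hinj

lemma my_ncard_biUnion_le {α β : Type*} (s : Finset β) (A : β → Set α) :
    (⋃ n ∈ s, A n).ncard ≤ ∑ n ∈ s, (A n).ncard := by
  classical
  induction s using Finset.induction_on with
  | empty => simp
  | insert a s' h ih =>
    rw [Finset.sum_insert h, Finset.set_biUnion_insert]
    exact le_trans (Set.ncard_union_le _ _) (by omega)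

theorem stmt_12 (a : ℕ) (ha : 1 < a) (c : ℝ) (hc : 0 < c) :
    ∃ C : ℝ, 0 < C ∧ ∃ d₀ : ℕ, ∀ d : ℕ, d₀ ≤ d → ∀ K : ℕ,
      c * (d : ℝ) < (K : ℝ) → (K : ℝ) ≤ (d : ℝ) ^ (a - 1) →
      (Nat.card {f : Polynomial ℤ | f ∈ PdK d K ∧ ∃ n : ℕ, 1 ≤ n ∧
            ((Polynomial.cyclotomic n ℤ).natDegree : ℝ) ≤ Real.sqrt d / (Real.log d) ^ 2 ∧
            Polynomial.cyclotomic n ℤ ∣ f} : ℝ) /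
          (Nat.card ↥(PdK d K) : ℝ)
        ≤ C / (K : ℝ) := by
  refine ⟨2 + 1 / c, by positivity, 3, ?_⟩
  intro d hd K hK1 _hK2
  have hd3 : 3 ≤ d := hd
  have hdR : (3 : ℝ) ≤ (d : ℝ) := by exact_mod_cast hd3
  have hKpos : 1 ≤ K := by
    rcases Nat.eq_zero_or_pos K with rfl | h
    · exfalso
      have : (0 : ℝ) < c * d := by positivity
      simp only [Nat.cast_zero] at hK1
      linarith
    · exact h
  have hKR : (1 : ℝ) ≤ (K : ℝ) := by exact_mod_cast hKpos
  -- A n sets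
  set A : ℕ → Set (Polynomial ℤ) :=
    fun n => {f : Polynomial ℤ | f ∈ PdK d K ∧ cyclotomic n ℤ ∣ f} with hA
  set S : Set (Polynomial ℤ) :=
    {f : Polynomial ℤ | f ∈ PdK d K ∧ ∃ n : ℕ, 1 ≤ n ∧
      ((cyclotomic n ℤ).natDegree : ℝ) ≤ Real.sqrt d / (Real.log d) ^ 2 ∧
      cyclotomic n ℤ ∣ f} with hS
  -- log d ≥ 1
  have hlog : 1 ≤ Real.log d := by
    rw [Real.le_log_iff_exp_le (by linarith)]
    have := Real.exp_one_lt_d9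
    linarith
  -- subset of union
  have hsub : S ⊆ (A 1 ∪ A 2) ∪ ⋃ n ∈ Finset.Icc 3 (2 * d), A n := by
    rintro f ⟨hfP, n, hn1, hndeg, hndvd⟩
    rw [natDegree_cyclotomic] at hndeg
    have hφ : (n.totient : ℝ) ≤ Real.sqrt d := by
      refine le_trans hndeg (div_le_self (Real.sqrt_nonneg _) ?_)
      nlinarith
    have hφ2 : n.totient ^ 2 ≤ d := by
      have h1 : ((n.totient : ℝ)) ^ 2 ≤ (Real.sqrt d) ^ 2 := by
        apply pow_le_pow_left₀ (by positivity) hφ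
      rw [Real.sq_sqrt (by linarith : (0:ℝ) ≤ (d:ℝ))] at h1
      exact_mod_cast h1
    have hn2d : n ≤ 2 * d := le_trans (totient_sq_bound n).1 (by omega)
    rcases lt_or_ge n 3 with hn3 | hn3
    · left
      interval_cases n
      · exact Or.inl ⟨hfP, hndvd⟩
      · exact Or.inr ⟨hfP, hndvd⟩
    · right
      exact Set.mem_iUnion₂.2 ⟨n, Finset.mem_Icc.2 ⟨hn3, hn2d⟩, ⟨hfP, hndvd⟩⟩
  have hAfin : ∀ n, (A n).Finite := fun n =>
    (finite_PdK d K).subset fun f hf => hf.1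
  have hTfin : ((A 1 ∪ A 2) ∪ ⋃ n ∈ Finset.Icc 3 (2 * d), A n).Finite :=
    ((hAfin 1).union (hAfin 2)).union
      ((Finset.Icc 3 (2 * d)).finite_toSet.biUnion fun n _ => hAfin n)
  have hAcard : ∀ n, (A n).ncard ≤ (2 * K + 1) ^ (d - n.totient) := by
    intro n
    rw [← Nat.card_coe_set_eq]
    exact card_dvd_le d K n
  -- numerator bound (ℕ)
  have hnum : Nat.card ↥S ≤ 2 * (2 * K + 1) ^ (d - 1) + 2 * d * (2 * K + 1) ^ (d - 2) := by
    rw [Nat.card_coe_set_eq]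
    calc S.ncard ≤ ((A 1 ∪ A 2) ∪ ⋃ n ∈ Finset.Icc 3 (2 * d), A n).ncard :=
          Set.ncard_le_ncard hsub hTfin
      _ ≤ (A 1 ∪ A 2).ncard + (⋃ n ∈ Finset.Icc 3 (2 * d), A n).ncard :=
          Set.ncard_union_le _ _
      _ ≤ ((A 1).ncard + (A 2).ncard) + ∑ n ∈ Finset.Icc 3 (2 * d), (A n).ncard := by
          have h1 := Set.ncard_union_le (A 1) (A 2)
          have h2 := my_ncard_biUnion_le (Finset.Icc 3 (2 * d)) A
          omega
      _ ≤ 2 * (2 * K + 1) ^ (d - 1) + 2 * d * (2 * K + 1) ^ (d - 2) := by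
          have h1 : (A 1).ncard ≤ (2 * K + 1) ^ (d - 1) := by
            have := hAcard 1
            simpa [Nat.totient_one] using this
          have h2 : (A 2).ncard ≤ (2 * K + 1) ^ (d - 1) := by
            have := hAcard 2
            simpa [Nat.totient_two] using this
          have h3 : ∑ n ∈ Finset.Icc 3 (2 * d), (A n).ncard
              ≤ (Finset.Icc 3 (2 * d)).card * (2 * K + 1) ^ (d - 2) := by
            rw [← smul_eq_mul]
            apply Finset.sum_le_card_nsmul
            intro n hn
            rw [Finset.mem_Icc] at hn
            refine le_trans (hAcard n) (Nat.pow_le_pow_right (by omega) ?_)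
            have hev : Even n.totient := Nat.totient_even (by omega)
            have hpos : 0 < n.totient := Nat.totient_pos.2 (by omega)
            have : 2 ≤ n.totient := by
              rcases hev with ⟨t, ht⟩
              omega
            omega
          have h4 : (Finset.Icc 3 (2 * d)).card ≤ 2 * d := by
            rw [Nat.card_Icc]
            omega
          have h5 : (Finset.Icc 3 (2 * d)).card * (2 * K + 1) ^ (d - 2)
              ≤ 2 * d * (2 * K + 1) ^ (d - 2) :=
            Nat.mul_le_mul_right _ h4
          omega
  -- denominator bound (ℕ)
  have hden := card_PdK_ge d K (by omega) hKpos
  -- real versions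
  set Q : ℝ := ((2 * K + 1 : ℕ) : ℝ) with hQ
  have hQpos : (0 : ℝ) < Q := by positivity
  have hQ' : Q = 2 * (K : ℝ) + 1 := by rw [hQ]; push_cast; ring
  have hnumR : (Nat.card ↥S : ℝ) ≤ 2 * Q ^ (d - 1) + 2 * d * Q ^ (d - 2) := by
    have h := (Nat.cast_le (α := ℝ)).2 hnum
    push_cast at h
    rw [hQ']
    linarith
  have hdenR : (K : ℝ) * Q ^ (d - 1) ≤ (Nat.card ↥(PdK d K) : ℝ) := by
    have h := (Nat.cast_le (α := ℝ)).2 hden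
    push_cast at h
    rw [hQ']
    linarith
  have hdenpos : (0 : ℝ) < (Nat.card ↥(PdK d K) : ℝ) := by
    have : (0 : ℝ) < (K : ℝ) * Q ^ (d - 1) := by positivity
    linarith
  have hKR0 : (0 : ℝ) < (K : ℝ) := by linarith
  rw [div_le_div_iff₀ hdenpos hKR0]
  -- key arithmetic
  have hQK : 2 * c * d ≤ Q := by
    have : ((2 * K + 1 : ℕ) : ℝ) = 2 * (K : ℝ) + 1 := by push_cast; ring
    rw [hQ, this]
    nlinarith
  have key : 2 * Q ^ (d - 1) + 2 * d * Q ^ (d - 2) ≤ (2 + 1 / c) * Q ^ (d - 1) := by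
    have hsplit : Q ^ (d - 1) = Q ^ (d - 2) * Q := by
      rw [← pow_succ]
      congr 1
      omega
    have h2d : 2 * (d : ℝ) * Q ^ (d - 2) ≤ (1 / c) * Q ^ (d - 1) := by
      rw [hsplit]
      have hstep : 2 * (d : ℝ) ≤ Q / c := by
        rw [le_div_iff₀ hc]
        nlinarith
      calc 2 * (d : ℝ) * Q ^ (d - 2) ≤ (Q / c) * Q ^ (d - 2) :=
            mul_le_mul_of_nonneg_right hstep (by positivity)
        _ = (1 / c) * (Q ^ (d - 2) * Q) := by ring
    nlinarith [pow_nonneg (le_of_lt hQpos) (d - 1)]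
  calc (Nat.card ↥S : ℝ) * (K : ℝ)
      ≤ ((2 + 1 / c) * Q ^ (d - 1)) * (K : ℝ) := by
        apply mul_le_mul_of_nonneg_right (le_trans hnumR key) (by linarith)
    _ = (2 + 1 / c) * ((K : ℝ) * Q ^ (d - 1)) := by ring
    _ ≤ (2 + 1 / c) * (Nat.card ↥(PdK d K) : ℝ) := by
        apply mul_le_mul_of_nonneg_left hdenR (by positivity)
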